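/- Let Γ be an infinite group with finite symmetric generating set S of size D, and define, for m ≥ 1, R(m) := min{ n ≥ 1 : |B(o,n)| ≥ m }. Then for every finite nonempty set K ⊆ Γ, the inner vertex boundary satisfies |∂_V K| / |K| ≥ 1 / (2 R(2|K|)). -/

import Mathlib

open scoped Classical

/-- The ball of radius `n` around the identity in the Cayley graph of a group
with generating set `S`. -/
def cayleyBall {Γ : Type u} [Group Γ] (S : Finset Γ) (n : ℕ) : Set Γ :=
  {x | ∃ l : List Γ, (∀ g ∈ l, g ∈ S) ∧ l.length ≤ n ∧ l.prod = x}

/-- The inverse growth function `R(m) = min{n ≥ 1 : |B(o,n)| ≥ m}`. -/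
noncomputable def invGrowth {Γ : Type u} [Group Γ] (S : Finset Γ) (m : ℕ) : ℕ :=
  sInf {n : ℕ | 1 ≤ n ∧ m ≤ Nat.card (cayleyBall S n)}

/-- A `Finset` version of the Cayley ball. -/
noncomputable def ballF {Γ : Type u} [Group Γ] [DecidableEq Γ] (S : Finset Γ) : ℕ → Finset Γ
  | 0 => {1}
  | (n+1) => ballF S n ∪ S.biUnion (fun s => (ballF S n).image (fun x => s * x))

lemma cayleyBall_mono {Γ : Type u} [Group Γ] (S : Finset Γ) {m n : ℕ} (h : m ≤ n) :
    cayleyBall S m ⊆ cayleyBall S n := by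
  rintro x ⟨l, hl, hlen, hprod⟩
  exact ⟨l, hl, hlen.trans h, hprod⟩

lemma coe_ballF {Γ : Type u} [Group Γ] [DecidableEq Γ] (S : Finset Γ) (n : ℕ) :
    (ballF S n : Set Γ) = cayleyBall S n := by
  induction n with
  | zero =>
    ext x
    simp only [ballF, Finset.coe_singleton, Set.mem_singleton_iff, cayleyBall, Set.mem_setOf_eq]
    constructor
    · rintro rfl; exact ⟨[], by simp, by simp, by simp⟩
    · rintro ⟨l, _, hlen, hprod⟩
      rw [Nat.le_zero, List.length_eq_zero_iff] at hlen
      subst hlen; simpa using hprod.symm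
  | succ n ih =>
    ext x
    simp only [ballF, Finset.coe_union, Set.mem_union, Finset.coe_biUnion, Finset.mem_coe,
      Set.mem_iUnion, Finset.mem_image, exists_prop]
    constructor
    · rintro (hx | ⟨s, hs, y, hy, rfl⟩)
      · exact cayleyBall_mono S (Nat.le_succ n) (ih ▸ Finset.mem_coe.mpr hx)
      · have hy' : y ∈ cayleyBall S n := ih ▸ Finset.mem_coe.mpr hy
        obtain ⟨l, hl, hlen, hprod⟩ := hy'
        exact ⟨s :: l, by
          intro g hg
          rcases List.mem_cons.mp hg with rfl | hg
          · exact hs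
          · exact hl g hg, by simpa using Nat.succ_le_succ hlen, by simp [hprod]⟩
    · rintro ⟨l, hl, hlen, rfl⟩
      cases l with
      | nil =>
        left
        have : (1 : Γ) ∈ cayleyBall S n := ⟨[], by simp, by simp, by simp⟩
        rw [← ih] at this
        simpa using this
      | cons s t =>
        right
        refine ⟨s, hl s (by simp), t.prod, ?_, by simp⟩
        have : t.prod ∈ cayleyBall S n :=
          ⟨t, fun g hg => hl g (List.mem_cons_of_mem s hg), by simpa using Nat.le_of_succ_le_succ hlen, rfl⟩
        rw [← ih] at this
        exact this

/-- Discrete intermediate value: if a predicate holds at 0 and fails at `m`, there is a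
crossing point. -/
lemma discrete_ivt (p : ℕ → Prop) : ∀ m : ℕ, p 0 → ¬ p m → ∃ i, i < m ∧ p i ∧ ¬ p (i+1) := by
  intro m
  induction m with
  | zero => intro h0 hm; exact absurd h0 hm
  | succ m ih =>
    intro h0 hm
    by_cases hpm : p m
    · exact ⟨m, Nat.lt_succ_self m, hpm, hm⟩
    · obtain ⟨i, hi, h1, h2⟩ := ih h0 hpm
      exact ⟨i, hi.trans (Nat.lt_succ_self m), h1, h2⟩

/-- Vertex isoperimetric inequality for Cayley graphs (Lyons--Morris--Schramm):
`|∂_V K| / |K| ≥ 1 / (2 R(2|K|))`. -/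
theorem vertex_isoperimetry
    {Γ : Type*} [Group Γ] [Infinite Γ] (S : Finset Γ) (D : ℕ) (hD : S.card = D)
    (hsymm : ∀ s ∈ S, s⁻¹ ∈ S)
    (hgen : Subgroup.closure (S : Set Γ) = ⊤)
    (K : Finset Γ) (hK : K.Nonempty) :
    (1 : ℝ) / (2 * invGrowth S (2 * K.card)) ≤
      ((K.filter (fun x => ∃ s ∈ S, x * s ∉ K)).card : ℝ) / K.card := by
  classical
  -- every element is in some ball
  have hUnion : ∀ x : Γ, ∃ N, x ∈ cayleyBall S N := by
    intro x
    have hx : x ∈ Subgroup.closure (S : Set Γ) := by rw [hgen]; trivial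
    induction hx using Subgroup.closure_induction with
    | mem y hy => exact ⟨1, [y], by simpa using hy, by simp, by simp⟩
    | one => exact ⟨0, [], by simp, by simp, by simp⟩
    | mul y z hy hz ihy ihz =>
      obtain ⟨N1, l1, hl1, hlen1, hprod1⟩ := ihy
      obtain ⟨N2, l2, hl2, hlen2, hprod2⟩ := ihz
      exact ⟨N1 + N2, l1 ++ l2, by
        intro g hg
        rcases List.mem_append.mp hg with h | h
        · exact hl1 g h
        · exact hl2 g h, by simpa using Nat.add_le_add hlen1 hlen2,
        by simp [hprod1, hprod2]⟩
    | inv y hy ihy =>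
      obtain ⟨N, l, hl, hlen, hprod⟩ := ihy
      refine ⟨N, (l.map fun g => g⁻¹).reverse, ?_, by simpa using hlen, ?_⟩
      · intro g hg
        simp only [List.mem_reverse, List.mem_map] at hg
        obtain ⟨a, ha, rfl⟩ := hg
        exact hsymm a (hl a ha)
      · rw [← List.prod_inv_reverse, hprod]
  -- the set defining invGrowth is nonempty
  have hballfin : ∀ N : ℕ, (cayleyBall S N).Finite := by
    intro N
    rw [← coe_ballF S N]
    exact (ballF S N).finite_toSet
  have hcardball : ∀ N : ℕ, Nat.card (cayleyBall S N) = (ballF S N).card := by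
    intro N
    rw [Nat.card_coe_set_eq, ← coe_ballF S N, Set.ncard_coe_finset]
  have hne : {n : ℕ | 1 ≤ n ∧ 2 * K.card ≤ Nat.card (cayleyBall S n)}.Nonempty := by
    obtain ⟨T, hT⟩ := Infinite.exists_subset_card_eq Γ (2 * K.card)
    choose nf hnf using hUnion
    refine ⟨T.sup nf + 1, Nat.le_add_left 1 _, ?_⟩
    have hsub : (T : Set Γ) ⊆ cayleyBall S (T.sup nf + 1) := by
      intro t ht
      exact cayleyBall_mono S (Nat.le_succ_of_le (Finset.le_sup (Finset.mem_coe.mp ht)))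
        (hnf t)
    calc 2 * K.card = T.card := hT.symm
      _ = Nat.card (T : Set Γ) := by rw [Nat.card_coe_set_eq, Set.ncard_coe_finset]
      _ ≤ Nat.card (cayleyBall S (T.sup nf + 1)) :=
          Nat.card_mono (hballfin _) (by exact_mod_cast hsub)
  set n := invGrowth S (2 * K.card) with hn_def
  have hspec : 1 ≤ n ∧ 2 * K.card ≤ Nat.card (cayleyBall S n) := Nat.sInf_mem hne
  obtain ⟨hn1, hncard⟩ := hspec
  set F : Finset Γ := ballF S n with hF_def
  have hF2k : 2 * K.card ≤ F.card := by rw [← hcardball n]; exact hncard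
  -- word function
  set w : Γ → List Γ := fun g => if h : g ∈ cayleyBall S n then h.choose else [] with hw_def
  have hw : ∀ g ∈ cayleyBall S n,
      (∀ a ∈ w g, a ∈ S) ∧ (w g).length ≤ n ∧ (w g).prod = g := by
    intro g hg
    simp only [hw_def, dif_pos hg]
    exact hg.choose_spec
  set B : Finset Γ := K.filter (fun x => ∃ s ∈ S, x * s ∉ K) with hB_def
  set P : Finset (Γ × Γ) := (K ×ˢ F).filter (fun p => p.1 * p.2 ∉ K) with hP_def
  -- lower bound on P.card
  have hlow : K.card * (F.card - K.card) ≤ P.card := by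
    have hfib : P.card = ∑ x ∈ K, (P.filter (fun p => p.1 = x)).card :=
      Finset.card_eq_sum_card_fiberwise (fun p hp => by
        simp only [hP_def, Finset.mem_coe, Finset.mem_filter, Finset.mem_product] at hp
        exact hp.1.1)
    rw [hfib]
    have hbound : ∀ x ∈ K, F.card - K.card ≤ (P.filter (fun p => p.1 = x)).card := by
      intro x hx
      have h1 : (F.filter (fun g => x * g ∉ K)).card ≤ (P.filter (fun p => p.1 = x)).card := by
        apply Finset.card_le_card_of_injOn (fun g => (x, g))
        · intro g hg
          simp only [Finset.mem_coe, Finset.mem_filter] at hg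
          exact Finset.mem_filter.mpr ⟨Finset.mem_filter.mpr
            ⟨Finset.mem_product.mpr ⟨hx, hg.1⟩, hg.2⟩, rfl⟩
        · intro a _ b _ h
          exact (Prod.mk.injEq _ _ _ _).mp h |>.2
      refine le_trans ?_ h1
      have h2 : (F.filter (fun g => x * g ∈ K)).card ≤ K.card := by
        apply Finset.card_le_card_of_injOn (fun g => x * g)
        · intro g hg; exact (Finset.mem_filter.mp hg).2
        · intro a _ b _ h; exact mul_left_cancel h
      have h3 := Finset.card_filter_add_card_filter_not
        (s := F) (p := fun g => x * g ∈ K)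
      omega
    calc K.card * (F.card - K.card) = ∑ _x ∈ K, (F.card - K.card) := by
          rw [Finset.sum_const, smul_eq_mul]
      _ ≤ ∑ x ∈ K, (P.filter (fun p => p.1 = x)).card := Finset.sum_le_sum hbound
  -- upper bound on P.card
  -- index function: crossing point
  set idx : Γ × Γ → ℕ := fun p =>
    if h : ∃ i, i < (w p.2).length ∧ p.1 * ((w p.2).take i).prod ∈ K ∧
        p.1 * ((w p.2).take (i+1)).prod ∉ K then h.choose else 0 with hidx_def
  have hup : P.card ≤ F.card * (B.card * n) := by
    have := Finset.card_le_card_of_injOn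
      (s := P) (t := F ×ˢ (B ×ˢ Finset.range n))
      (fun p => (p.2, (p.1 * ((w p.2).take (idx p)).prod, idx p)))
      ?_ ?_
    · simpa [Finset.card_product, mul_assoc] using this
    · -- maps into
      intro p hp
      simp only [hP_def, Finset.mem_coe, Finset.mem_filter, Finset.mem_product] at hp
      obtain ⟨⟨hxK, hgF⟩, hout⟩ := hp
      have hgball : p.2 ∈ cayleyBall S n := by
        rw [← coe_ballF S n]; exact hgF
      obtain ⟨hwS, hwlen, hwprod⟩ := hw p.2 hgball
      have hex : ∃ i, i < (w p.2).length ∧ p.1 * ((w p.2).take i).prod ∈ K ∧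
          p.1 * ((w p.2).take (i+1)).prod ∉ K := by
        apply discrete_ivt (fun i => p.1 * ((w p.2).take i).prod ∈ K)
        · simpa using hxK
        · rw [List.take_length, hwprod]; exact hout
      have hidxspec : idx p < (w p.2).length ∧ p.1 * ((w p.2).take (idx p)).prod ∈ K ∧
          p.1 * ((w p.2).take (idx p + 1)).prod ∉ K := by
        simp only [hidx_def, dif_pos hex]
        exact hex.choose_spec
      obtain ⟨hilt, hyK, hynext⟩ := hidxspec
      simp only [Finset.mem_coe, Finset.mem_product, Finset.mem_range]
      refine ⟨hgF, ?_, lt_of_lt_of_le hilt hwlen⟩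
      simp only [hB_def, Finset.mem_filter]
      refine ⟨hyK, (w p.2)[idx p], hwS _ (List.getElem_mem hilt), ?_⟩
      rw [mul_assoc, ← List.prod_take_succ (w p.2) (idx p) hilt]
      exact hynext
    · -- injective
      intro p1 h1 p2 h2 heq
      simp only [Prod.mk.injEq] at heq
      obtain ⟨hg, hy, hi⟩ := heq
      have hx : p1.1 = p2.1 := by
        have := hy
        rw [hg, hi] at this
        exact mul_right_cancel this
      exact Prod.ext hx hg
  -- combine
  have hFpos : 0 < F.card := by
    have : 0 < K.card := Finset.card_pos.mpr hK
    omega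
  have key : K.card ≤ 2 * n * B.card := by
    apply Nat.le_of_mul_le_mul_right (c := F.card) _ hFpos
    have hhalf : F.card ≤ 2 * (F.card - K.card) := by omega
    calc K.card * F.card ≤ K.card * (2 * (F.card - K.card)) :=
          Nat.mul_le_mul_left _ hhalf
      _ = 2 * (K.card * (F.card - K.card)) := by ring
      _ ≤ 2 * (F.card * (B.card * n)) := Nat.mul_le_mul_left _ (hlow.trans hup)
      _ = 2 * n * B.card * F.card := by ring
  -- finish with real arithmetic
  have hKpos : (0 : ℝ) < K.card := by exact_mod_cast Finset.card_pos.mpr hK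
  have hnpos : (0 : ℝ) < 2 * (n : ℝ) := by
    have : (1 : ℝ) ≤ n := by exact_mod_cast hn1
    linarith
  rw [div_le_div_iff₀ hnpos hKpos, one_mul]
  have : (K.card : ℝ) ≤ 2 * n * B.card := by exact_mod_cast key
  calc (K.card : ℝ) ≤ 2 * n * B.card := this
    _ = (B.card : ℝ) * (2 * n) := by ring
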